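/- Let $S = \mathrm{Spec}\,R$ for a commutative ring $R$, let $X = \mathrm{Spec}\,A$ with $A$ a flat $R$-algebra, and let $I \subseteq A$ be an ideal such that $A/I^n$ is $R$-flat for every $n \geq 1$. Then for every $n$, each $I^n$ is $R$-flat, and for every $R$-algebra $R \to k$ with $k$ a field, the natural map $I^n \otimes_R k \to A \otimes_R k$ is injective with image $(I \otimes_R k \cdot (A \otimes_R k))^n$; equivalently, $\mathfrak{m} I^n = \mathfrak{m} A \cap I^n$ for every maximal ideal $\mathfrak{m}$ of $R$ coming from a point of $S$, so the formation of the Rees algebra $\bigoplus_n I^n$ commutes with base change to fibers. -/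

import Mathlib

set_option synthInstance.maxHeartbeats 1000000
set_option maxHeartbeats 1000000

open TensorProduct LinearMap Function in
private lemma stmt18_aux_chase {R N M Q K F P : Type*} [CommRing R]
    [AddCommGroup N] [AddCommGroup M] [AddCommGroup Q]
    [AddCommGroup K] [AddCommGroup F] [AddCommGroup P]
    [Module R N] [Module R M] [Module R Q] [Module R K] [Module R F] [Module R P]
    [Module.Flat R Q] [Module.Flat R F]
    (f : N →ₗ[R] M) (g : M →ₗ[R] Q) (hf : Injective f) (hfg : Exact f g)
    (hg : Surjective g)
    (k : K →ₗ[R] F) (p : F →ₗ[R] P) (hk : Injective k) (hkp : Exact k p)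
    (hp : Surjective p) :
    Injective (rTensor P f) := by
  rw [injective_iff_map_eq_zero]
  intro x hx
  obtain ⟨y, hy⟩ := lTensor_surjective N hp x
  have hexM := lTensor_exact (f := k) (g := p) M hkp hp
  have hexK := rTensor_exact (f := f) (g := g) K hfg hg
  have h1 : lTensor M p (rTensor F f y) = 0 := by
    have h : lTensor M p (rTensor F f y) = rTensor P f (lTensor N p y) := by
      rw [← LinearMap.comp_apply, ← LinearMap.comp_apply, lTensor_comp_rTensor,
        rTensor_comp_lTensor]
    rw [h, hy, hx]
  obtain ⟨z, hz⟩ := (hexM _).mp h1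
  have h2 : rTensor K g z = 0 := by
    apply Module.Flat.lTensor_preserves_injective_linearMap k hk
    rw [map_zero]
    have hcomm : lTensor Q k (rTensor K g z) = rTensor F g (lTensor M k z) := by
      rw [← LinearMap.comp_apply, ← LinearMap.comp_apply, lTensor_comp_rTensor,
        rTensor_comp_lTensor]
    rw [hcomm, hz, ← LinearMap.comp_apply, ← rTensor_comp]
    have hgf : g ∘ₗ f = 0 := LinearMap.ext fun t => hfg.apply_apply_eq_zero t
    rw [hgf, rTensor_zero, LinearMap.zero_apply]
  obtain ⟨w, hw⟩ := (hexK z).mp h2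
  have h3 : lTensor N k w = y := by
    apply Module.Flat.rTensor_preserves_injective_linearMap f hf
    have hcomm : rTensor F f (lTensor N k w) = lTensor M k (rTensor K f w) := by
      rw [← LinearMap.comp_apply, ← LinearMap.comp_apply, rTensor_comp_lTensor,
        lTensor_comp_rTensor]
    rw [hcomm, hw, hz]
  have hpk : p ∘ₗ k = 0 := LinearMap.ext fun t => hkp.apply_apply_eq_zero t
  rw [← hy, ← h3, ← LinearMap.comp_apply, ← lTensor_comp, hpk, lTensor_zero, LinearMap.zero_apply]

open TensorProduct LinearMap Function in
/-- If `0 → N → M → Q → 0` is exact with `Q` flat, then `N ⊗ P → M ⊗ P` is injective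
for every module `P`. -/
private lemma stmt18_aux_rTensor_injective {R N M Q : Type*} [CommRing R]
    [AddCommGroup N] [AddCommGroup M] [AddCommGroup Q]
    [Module R N] [Module R M] [Module R Q]
    (f : N →ₗ[R] M) (g : M →ₗ[R] Q) (hf : Injective f) (hfg : Exact f g)
    (hg : Surjective g) [Module.Flat R Q]
    (P : Type*) [AddCommGroup P] [Module R P] :
    Injective (rTensor P f) :=
  stmt18_aux_chase (K := ↥(LinearMap.ker (Finsupp.linearCombination R (_root_.id : P → P))))
    (F := P →₀ R)
    f g hf hfg hg (LinearMap.ker (Finsupp.linearCombination R (_root_.id : P → P))).subtype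
    (Finsupp.linearCombination R _root_.id) (Submodule.injective_subtype _)
    ((Finsupp.linearCombination R _root_.id).exact_subtype_ker_map)
    (Finsupp.linearCombination_id_surjective R P)

open TensorProduct LinearMap Function in
/-- The key lemma: if `A ⧸ I'` is `R`-flat then `I' ⊗ P → A ⊗ P` is injective. -/
private lemma stmt18_key {R A : Type*} [CommRing R] [CommRing A] [Algebra R A]
    (I' : Ideal A) [Module.Flat R (A ⧸ I')]
    (P : Type*) [AddCommGroup P] [Module R P] :
    Injective (rTensor P ((I'.subtype).restrictScalars R)) := by
  refine stmt18_aux_rTensor_injective _ ((I'.mkQ).restrictScalars R) ?_ ?_ ?_ P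
  · exact Subtype.coe_injective
  · exact LinearMap.exact_subtype_mkQ I'
  · exact Submodule.mkQ_surjective _

open TensorProduct in
/-- if `A` is a flat `R`-algebra and `I ⊆ A` an ideal with `A/Iⁿ` flat over
`R` for all `n ≥ 1`, then each `Iⁿ` is `R`-flat, the natural map `Iⁿ ⊗_R κ → A ⊗_R κ` is
injective for every residue field `κ`, and `𝔪·Iⁿ = 𝔪A ⊓ Iⁿ` for every maximal ideal `𝔪`
of `R`: the formation of the Rees algebra `⊕ Iⁿ` (hence of the blowup `Bl_I X → S`)
commutes with base change to fibers. -/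
theorem stmt_18 (R A : Type*) [CommRing R] [CommRing A] [Algebra R A]
    (hA : Module.Flat R A) (I : Ideal A)
    (hquot : ∀ n : ℕ, 1 ≤ n → Module.Flat R (A ⧸ I ^ n)) :
    (∀ n : ℕ, Module.Flat R (I ^ n : Ideal A)) ∧
    (∀ n : ℕ, ∀ (κ : Type*) [Field κ] [Algebra R κ],
      Function.Injective
        (LinearMap.rTensor κ (((I ^ n : Ideal A).subtype).restrictScalars R))) ∧
    (∀ 𝔪 : Ideal R, 𝔪.IsMaximal → ∀ n : ℕ,
      Ideal.map (algebraMap R A) 𝔪 * I ^ n = Ideal.map (algebraMap R A) 𝔪 ⊓ I ^ n) := by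
  classical
  have hQ : ∀ n : ℕ, Module.Flat R (A ⧸ I ^ n) := by
    intro n
    rcases Nat.eq_zero_or_pos n with h | h
    · subst h
      haveI : Subsingleton (A ⧸ I ^ 0) := by
        rw [pow_zero, Ideal.one_eq_top]
        exact Submodule.Quotient.subsingleton_iff.mpr rfl
      infer_instance
    · exact hquot n h
  refine ⟨?_, ?_, ?_⟩
  · -- flatness of Iⁿ
    intro n
    haveI := hQ n
    rw [Module.Flat.iff_rTensor_injective']
    intro J
    set f : ↥(I ^ n) →ₗ[R] A := ((I ^ n : Ideal A).subtype).restrictScalars R with hf_def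
    have h1 : Function.Injective (LinearMap.lTensor (↥J) f) :=
      (LinearMap.lTensor_inj_iff_rTensor_inj _ _).mpr (stmt18_key (I ^ n) ↥J)
    have h2 : Function.Injective (LinearMap.rTensor A J.subtype) :=
      (Module.Flat.iff_rTensor_injective').mp hA J
    have hcomp : (LinearMap.rTensor A J.subtype) ∘ₗ (LinearMap.lTensor (↥J) f)
        = (LinearMap.lTensor R f) ∘ₗ (LinearMap.rTensor (↥(I ^ n)) J.subtype) := by
      rw [LinearMap.rTensor_comp_lTensor, LinearMap.lTensor_comp_rTensor]
    have h3 : Function.Injective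
        (⇑(LinearMap.lTensor R f) ∘ ⇑(LinearMap.rTensor (↥(I ^ n)) J.subtype)) := by
      have h4 := h2.comp h1
      rwa [← LinearMap.coe_comp, hcomp, LinearMap.coe_comp] at h4
    exact h3.of_comp
  · -- injectivity after tensoring with residue fields
    intro n κ _ _
    haveI := hQ n
    exact stmt18_key (I ^ n) κ
  · -- 𝔪·Iⁿ = 𝔪A ⊓ Iⁿ
    intro 𝔪 h𝔪 n
    haveI := hQ n
    set f : ↥(I ^ n) →ₗ[R] A := ((I ^ n : Ideal A).subtype).restrictScalars R with hf_def
    have hinj := stmt18_key (R := R) (I ^ n) (R ⧸ 𝔪)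
    have hle : 𝔪 • (⊤ : Submodule R ↥(I ^ n)) ≤ (𝔪 • (⊤ : Submodule R A)).comap f := by
      rw [← Submodule.map_le_iff_le_comap, Submodule.map_smul'']
      exact Submodule.smul_mono le_rfl le_top
    set q := Submodule.mapQ (𝔪 • (⊤ : Submodule R ↥(I ^ n))) (𝔪 • (⊤ : Submodule R A)) f hle
      with hq_def
    have hsq : (tensorQuotEquivQuotSMul A 𝔪).toLinearMap ∘ₗ LinearMap.rTensor (R ⧸ 𝔪) f
        = q ∘ₗ (tensorQuotEquivQuotSMul (↥(I ^ n)) 𝔪).toLinearMap := by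
      apply TensorProduct.ext'
      intro x y
      obtain ⟨r, rfl⟩ := Ideal.Quotient.mk_surjective y
      simp only [LinearMap.comp_apply, LinearEquiv.coe_coe, LinearMap.rTensor_tmul,
        tensorQuotEquivQuotSMul_tmul_mk, hq_def, Submodule.mapQ_apply, map_smul]
    have hqinj : Function.Injective q := by
      intro a b hab
      obtain ⟨a, rfl⟩ := (tensorQuotEquivQuotSMul (↥(I ^ n)) 𝔪).surjective a
      obtain ⟨b, rfl⟩ := (tensorQuotEquivQuotSMul (↥(I ^ n)) 𝔪).surjective b
      have ha := LinearMap.congr_fun hsq a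
      have hb := LinearMap.congr_fun hsq b
      simp only [LinearMap.comp_apply, LinearEquiv.coe_coe] at ha hb
      rw [← ha, ← hb] at hab
      rw [hinj ((tensorQuotEquivQuotSMul A 𝔪).injective hab)]
    have hmem : ∀ x : ↥(I ^ n), f x ∈ 𝔪 • (⊤ : Submodule R A) →
        x ∈ 𝔪 • (⊤ : Submodule R ↥(I ^ n)) := by
      intro x hx
      have h0 : q (Submodule.Quotient.mk x) = 0 := by
        rw [hq_def, Submodule.mapQ_apply, Submodule.Quotient.mk_eq_zero]
        exact hx
      have h1 : q (Submodule.Quotient.mk x) = q 0 := by rw [h0, map_zero]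
      have h2 := hqinj h1
      rwa [Submodule.Quotient.mk_eq_zero] at h2
    apply le_antisymm
    · exact Ideal.mul_le_inf
    · intro a ha
      obtain ⟨ha1, ha2⟩ := ha
      have hx : (⟨a, ha2⟩ : ↥(I ^ n)) ∈ 𝔪 • (⊤ : Submodule R ↥(I ^ n)) := by
        apply hmem
        rw [Ideal.smul_top_eq_map]
        exact ha1
      have hmm : a ∈ Submodule.map f (𝔪 • (⊤ : Submodule R ↥(I ^ n))) := ⟨_, hx, rfl⟩
      rw [Submodule.map_smul''] at hmm
      have hr : Submodule.map f (⊤ : Submodule R ↥(I ^ n))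
          = (I ^ n : Ideal A).restrictScalars R := by
        ext t
        constructor
        · rintro ⟨x, -, rfl⟩
          exact x.2
        · intro ht
          exact ⟨⟨t, ht⟩, trivial, rfl⟩
      rw [hr, ← Ideal.smul_restrictScalars, Ideal.smul_eq_mul] at hmm
      exact hmm
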